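/- arXiv:1008.0369 — 3 statements merged into one kernel-verified Lean document; each statement's English description precedes it below -/
import Mathlib

section
/- Let T : X → Y be a surjective bounded linear operator between Banach spaces with a bounded right inverse R (i.e., T∘R = id_Y). Then for any bounded operator S : X → Y with ‖S - T‖ < 1/‖R‖, the operator S∘R : Y → Y is invertible, and P := id_X - R∘(S∘R)⁻¹∘S is a bounded projection of X onto the kernel of S. -/
/-- If `T : X → Y` is a surjective bounded operator with bounded right inverse `R`,
then any bounded `S` with `‖S - T‖ < 1/‖R‖` has `S ∘ R` invertible, and
`P = id - R ∘ (S∘R)⁻¹ ∘ S` is a bounded projection of `X` onto `ker S`. -/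
theorem stmt_4 {X Y : Type*} [NormedAddCommGroup X] [NormedSpace ℝ X] [CompleteSpace X]
    [NormedAddCommGroup Y] [NormedSpace ℝ Y] [CompleteSpace Y]
    (T S : X →L[ℝ] Y) (R : Y →L[ℝ] X)
    (hTR : T.comp R = ContinuousLinearMap.id ℝ Y)
    (hS : ‖S - T‖ < 1 / ‖R‖) :
    ∃ V : Y →L[ℝ] Y,
      (S.comp R).comp V = ContinuousLinearMap.id ℝ Y ∧
      V.comp (S.comp R) = ContinuousLinearMap.id ℝ Y ∧
      (ContinuousLinearMap.id ℝ X - (R.comp V).comp S).comp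
          (ContinuousLinearMap.id ℝ X - (R.comp V).comp S)
        = ContinuousLinearMap.id ℝ X - (R.comp V).comp S ∧
      LinearMap.range ((ContinuousLinearMap.id ℝ X - (R.comp V).comp S : X →L[ℝ] X) : X →ₗ[ℝ] X)
        = LinearMap.ker (S : X →ₗ[ℝ] Y) := by
  have hR : 0 < ‖R‖ := by
    by_contra h
    push_neg at h
    have : ‖R‖ = 0 := le_antisymm h (norm_nonneg _)
    rw [this] at hS
    simp at hS
    exact absurd hS (not_lt.2 (norm_nonneg _))
  have hnorm : ‖-((S - T).comp R)‖ < 1 := by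
    rw [norm_neg]
    calc ‖(S - T).comp R‖ ≤ ‖S - T‖ * ‖R‖ := ContinuousLinearMap.opNorm_comp_le _ _
      _ < (1 / ‖R‖) * ‖R‖ := by exact mul_lt_mul_of_pos_right hS hR
      _ = 1 := by field_simp
  set u : (Y →L[ℝ] Y)ˣ := Units.oneSub (-((S - T).comp R)) hnorm with hu
  have huval : (u : Y →L[ℝ] Y) = S.comp R := by
    have : (u : Y →L[ℝ] Y) = 1 - (-((S - T).comp R)) := rfl
    rw [this]
    ext y
    simp [ContinuousLinearMap.comp_apply, hTR]
  refine ⟨↑u⁻¹, ?_, ?_, ?_, ?_⟩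
  · have := u.mul_inv
    rw [huval] at this
    exact this
  · have := u.inv_mul
    rw [huval] at this
    exact this
  · have hright : (S.comp R).comp (↑u⁻¹ : Y →L[ℝ] Y) = ContinuousLinearMap.id ℝ Y := by
      have := u.mul_inv; rw [huval] at this; exact this
    ext x
    simp only [ContinuousLinearMap.comp_apply, ContinuousLinearMap.sub_apply,
      ContinuousLinearMap.id_apply]
    have hSP : ∀ z : X, S (z - R ((↑u⁻¹ : Y →L[ℝ] Y) (S z))) = 0 := by
      intro z
      have := DFunLike.congr_fun hright (S z)
      simp only [ContinuousLinearMap.comp_apply, ContinuousLinearMap.id_apply] at this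
      simp [map_sub, this]
    rw [hSP x]
    simp
  · apply le_antisymm
    · rintro _ ⟨x, rfl⟩
      have hright : (S.comp R).comp (↑u⁻¹ : Y →L[ℝ] Y) = ContinuousLinearMap.id ℝ Y := by
        have := u.mul_inv; rw [huval] at this; exact this
      have := DFunLike.congr_fun hright (S x)
      simp only [ContinuousLinearMap.comp_apply, ContinuousLinearMap.id_apply] at this
      simp [LinearMap.mem_ker, map_sub, this]
    · intro x hx
      simp only [LinearMap.mem_ker, ContinuousLinearMap.coe_coe] at hx
      refine ⟨x, ?_⟩
      simp [hx]
end

section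
/- For the problem -f'' = λ f on [0,L] with f(L) = 0 and f'(0) = α f(0), each positive eigenvalue λ(α) = k(α)² with k L ∈ ((n-1)π, nπ) depends strictly monotonically increasingly on α ∈ ℝ: if α < α' then the corresponding n-th eigenvalue satisfies λ_n(α) < λ_n(α'). -/
open Set Real

lemma band_sin_ne_zero (n : ℕ) (t : ℝ) (h1 : ((n : ℝ) - 1) * π < t)
    (h2 : t < (n : ℝ) * π) : Real.sin t ≠ 0 := by
  intro h
  rw [Real.sin_eq_zero_iff] at h
  obtain ⟨m, hm⟩ := h
  have hπ := Real.pi_pos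
  rw [← hm] at h1 h2
  have hm1 : ((n : ℝ) - 1) < (m : ℝ) := by
    have := (mul_lt_mul_iff_of_pos_right hπ).mp h1; linarith
  have hm2 : (m : ℝ) < (n : ℝ) := by
    have := (mul_lt_mul_iff_of_pos_right hπ).mp h2; linarith
  have h1' : ((n : ℤ) - 1 : ℤ) < m := by exact_mod_cast (by push_cast; linarith : ((n : ℤ) - 1 : ℝ) < (m : ℝ))
  have h2' : m < (n : ℤ) := by exact_mod_cast hm2
  omega

lemma cot_mono (a b : ℝ) (ha : 0 ≤ a)
    (hs : ∀ t ∈ Set.Ioo a b, Real.sin t ≠ 0) :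
    StrictMonoOn (fun t => -t * Real.cos t / Real.sin t) (Set.Ioo a b) := by
  have hderiv : ∀ t ∈ Set.Ioo a b,
      HasDerivAt (fun t => -t * Real.cos t / Real.sin t)
        ((t - Real.sin t * Real.cos t) / Real.sin t ^ 2) t := by
    intro t ht
    have hsin := hs t ht
    have h1 : HasDerivAt (fun t : ℝ => -t * Real.cos t)
        ((-1) * Real.cos t + (-t) * (-Real.sin t)) t :=
      ((hasDerivAt_id t).neg).mul (Real.hasDerivAt_cos t)
    have h2 := h1.div (Real.hasDerivAt_sin t) hsin
    convert h2 using 1 <;> try rfl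
    have := Real.sin_sq_add_cos_sq t
    field_simp
    linear_combination (-t) * Real.sin_sq_add_cos_sq t
  apply strictMonoOn_of_deriv_pos (convex_Ioo a b)
  · intro t ht
    exact (hderiv t ht).continuousAt.continuousWithinAt
  · intro t ht
    rw [interior_Ioo] at ht
    rw [(hderiv t ht).deriv]
    have ht0 : 0 < t := lt_of_le_of_lt ha ht.1
    have hsin := hs t ht
    have hnum : Real.sin t * Real.cos t < t := by
      have h2t : Real.sin (2 * t) < 2 * t := Real.sin_lt (by linarith)
      rw [Real.sin_two_mul] at h2t
      linarith
    have hden : 0 < Real.sin t ^ 2 := by positivity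
    apply div_pos (by linarith) hden

/-- Strict monotonicity in `α` of the positive eigenvalues of `-f'' = λ f` on `[0,L]`
with `f(L) = 0`, `f'(0) = α f(0)`: if `k, k' > 0` solve the secular equation
`k cos(kL) = -α sin(kL)` for coupling constants `α < α'` respectively, and both
`kL, k'L` lie in the same band `((n-1)π, nπ)`, then `λ_n(α) = k² < k'² = λ_n(α')`. -/
theorem stmt_11 (L : ℝ) (hL : 0 < L) (n : ℕ) (hn : 1 ≤ n)
    (α α' : ℝ) (hαα' : α < α')
    (k k' : ℝ) (hk : 0 < k) (hk' : 0 < k')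
    (hband : k * L ∈ Ioo (((n : ℝ) - 1) * π) ((n : ℝ) * π))
    (hband' : k' * L ∈ Ioo (((n : ℝ) - 1) * π) ((n : ℝ) * π))
    (hsec : k * Real.cos (k * L) = -α * Real.sin (k * L))
    (hsec' : k' * Real.cos (k' * L) = -α' * Real.sin (k' * L)) :
    k ^ 2 < k' ^ 2 := by
  set a := ((n : ℝ) - 1) * π
  set b := (n : ℝ) * π
  have ha : 0 ≤ a := by
    have : (1 : ℝ) ≤ (n : ℝ) := by exact_mod_cast hn
    have := Real.pi_pos
    apply mul_nonneg <;> linarith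
  have hs : ∀ t ∈ Set.Ioo a b, Real.sin t ≠ 0 := fun t ht =>
    band_sin_ne_zero n t ht.1 ht.2
  have hmono := cot_mono a b ha hs
  have hsin := hs _ hband
  have hsin' := hs _ hband'
  have hval : (fun t => -t * Real.cos t / Real.sin t) (k * L) = L * α := by
    simp only
    rw [div_eq_iff hsin]
    nlinarith [hsec]
  have hval' : (fun t => -t * Real.cos t / Real.sin t) (k' * L) = L * α' := by
    simp only
    rw [div_eq_iff hsin']
    nlinarith [hsec']
  have hlt : k * L < k' * L := by
    by_contra h
    push_neg at h
    rcases lt_or_eq_of_le h with h | h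
    · have := hmono hband' hband h
      rw [hval, hval'] at this
      nlinarith
    · rw [h, hval] at hval'
      nlinarith
  have : k < k' := by
    exact lt_of_mul_lt_mul_right hlt hL.le
  nlinarith
end

section
/- Dirichlet–Robin interlacing on an interval: let λ_n denote the n-th eigenvalue of -f'' = λf on [0,L] with f(L)=0 and Robin condition f'(0) = α f(0), and let μ_n denote the n-th Dirichlet eigenvalue (f(0) = f(L) = 0), i.e., μ_n = (nπ/L)². Then for every n, λ_n ≤ μ_n ≤ λ_{n+1}. -/
open Set Real

/-- `f` is an eigenfunction of `-d²/dx²` on `[0, L]` with eigenvalue `μ`,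
Dirichlet condition at `x = L` and Robin condition `f'(0) = α f(0)` at `x = 0`. -/
def IsRobinDirichletEF (L α μ : ℝ) (f : ℝ → ℝ) : Prop :=
  ContDiff ℝ 2 f ∧
  (∀ x ∈ Icc 0 L, -(deriv (deriv f) x) = μ * f x) ∧
  f L = 0 ∧ deriv f 0 = α * f 0 ∧
  ∃ x ∈ Icc 0 L, f x ≠ 0

open Filter Topology

section helpers
variable {L s α : ℝ}

lemma hda_aff (s L x : ℝ) : HasDerivAt (fun y => s*(L-y)) (-s) x := by
  simpa using ((hasDerivAt_id x).const_sub L).const_mul s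

lemma hd_sinA (s L x : ℝ) :
    HasDerivAt (fun y => Real.sin (s*(L-y))) (-(s * Real.cos (s*(L-x)))) x := by
  have := (Real.hasDerivAt_sin (s*(L-x))).comp x (hda_aff s L x)
  convert this using 1 <;> (try rfl); ring

lemma hd_cosA (s L x : ℝ) :
    HasDerivAt (fun y => Real.cos (s*(L-y))) (s * Real.sin (s*(L-x))) x := by
  have := (Real.hasDerivAt_cos (s*(L-x))).comp x (hda_aff s L x)
  convert this using 1 <;> (try rfl); ring

lemma hd_sinhA (s L x : ℝ) :
    HasDerivAt (fun y => Real.sinh (s*(L-y))) (-(s * Real.cosh (s*(L-x)))) x := by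
  have := (Real.hasDerivAt_sinh (s*(L-x))).comp x (hda_aff s L x)
  convert this using 1 <;> (try rfl); ring

lemma hd_coshA (s L x : ℝ) :
    HasDerivAt (fun y => Real.cosh (s*(L-y))) (-(s * Real.sinh (s*(L-x)))) x := by
  have := (Real.hasDerivAt_cosh (s*(L-x))).comp x (hda_aff s L x)
  convert this using 1 <;> (try rfl); ring

lemma deriv_sinA (s L : ℝ) :
    deriv (fun y => Real.sin (s*(L-y))) = fun x => -(s * Real.cos (s*(L-x))) :=
  funext fun x => (hd_sinA s L x).deriv

lemma deriv2_sinA (s L : ℝ) :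
    deriv (deriv (fun y => Real.sin (s*(L-y)))) = fun x => -(s^2 * Real.sin (s*(L-x))) := by
  rw [deriv_sinA]
  funext x
  have h : HasDerivAt (fun y => -(s * Real.cos (s*(L-y)))) (-(s^2 * Real.sin (s*(L-x)))) x := by
    have := ((hd_cosA s L x).const_mul s).neg
    convert this using 1 <;> (try rfl); ring
  exact h.deriv

lemma deriv_sinhA (s L : ℝ) :
    deriv (fun y => Real.sinh (s*(L-y))) = fun x => -(s * Real.cosh (s*(L-x))) :=
  funext fun x => (hd_sinhA s L x).deriv

lemma deriv2_sinhA (s L : ℝ) :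
    deriv (deriv (fun y => Real.sinh (s*(L-y)))) = fun x => s^2 * Real.sinh (s*(L-x)) := by
  rw [deriv_sinhA]
  funext x
  have h : HasDerivAt (fun y => -(s * Real.cosh (s*(L-y)))) (s^2 * Real.sinh (s*(L-x))) x := by
    have := ((hd_coshA s L x).const_mul s).neg
    convert this using 1 <;> (try rfl); ring
  exact h.deriv

lemma contDiff_aff (s L : ℝ) : ContDiff ℝ 2 (fun y : ℝ => s*(L-y)) :=
  contDiff_const.mul (contDiff_const.sub contDiff_id)

/-- Existence: positive eigenvalue `s^2` when `s cos(sL) + α sin(sL) = 0`. -/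
lemma ef_sin (hL : 0 < L) (hs : 0 < s) (h : s * Real.cos (s*L) + α * Real.sin (s*L) = 0) :
    ∃ f, IsRobinDirichletEF L α (s^2) f := by
  refine ⟨fun y => Real.sin (s*(L-y)), ?_, ?_, ?_, ?_, ?_⟩
  · exact Real.contDiff_sin.comp (contDiff_aff s L)
  · intro x _
    rw [deriv2_sinA]; ring
  · simp
  · rw [deriv_sinA]
    simp only [sub_zero]
    linarith [h]
  · refine ⟨L - min L (π/(2*s)), ?_, ?_⟩
    · constructor
      · simp [min_le_left L (π/(2*s))]
      · have : 0 < min L (π/(2*s)) := lt_min hL (by positivity)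
        linarith
    · have h1 : s * (L - (L - min L (π/(2*s)))) = min (s*L) (π/2) := by
        rw [show L - (L - min L (π/(2*s))) = min L (π/(2*s)) by ring]
        rcases le_total L (π/(2*s)) with h'|h'
        · rw [min_eq_left h', min_eq_left]
          rw [le_div_iff₀ (by positivity)] at h'
          nlinarith
        · rw [min_eq_right h', min_eq_right]
          · field_simp
          · rw [div_le_iff₀ (by positivity)] at h'
            nlinarith
      show Real.sin (s * (L - (L - min L (π/(2*s))))) ≠ 0
      rw [h1]
      have h2 : 0 < min (s*L) (π/2) := lt_min (by positivity) (by positivity)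
      have h3 : min (s*L) (π/2) < π := lt_of_le_of_lt (min_le_right _ _) (by linarith [pi_pos])
      exact ne_of_gt (Real.sin_pos_of_pos_of_lt_pi h2 h3)

/-- Existence: negative eigenvalue `-(t^2)` when `t cosh(tL) + α sinh(tL) = 0`. -/
lemma ef_sinh (hL : 0 < L) (hs : 0 < s) (h : s * Real.cosh (s*L) + α * Real.sinh (s*L) = 0) :
    ∃ f, IsRobinDirichletEF L α (-(s^2)) f := by
  refine ⟨fun y => Real.sinh (s*(L-y)), ?_, ?_, ?_, ?_, ?_⟩
  · exact Real.contDiff_sinh.comp (contDiff_aff s L)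
  · intro x _
    rw [deriv2_sinhA]; ring
  · simp
  · rw [deriv_sinhA]
    simp only [sub_zero]
    linarith [h]
  · exact ⟨0, ⟨le_refl _, hL.le⟩, by
      simp only [sub_zero]
      exact ne_of_gt (by rw [← Real.sinh_zero]; exact Real.sinh_lt_sinh.mpr (by positivity))⟩

/-- Existence: zero eigenvalue when `αL = -1`. -/
lemma ef_lin (hL : 0 < L) (h : α * L = -1) :
    ∃ f, IsRobinDirichletEF L α 0 f := by
  refine ⟨fun y => L - y, ?_, ?_, ?_, ?_, ?_⟩
  · exact contDiff_const.sub contDiff_id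
  · intro x _
    have hd : deriv (fun y : ℝ => L - y) = fun _ => (-1 : ℝ) :=
      funext fun x => ((hasDerivAt_id x).const_sub L).deriv
    rw [hd]
    simp
  · simp
  · have hd : deriv (fun y : ℝ => L - y) = fun _ => (-1 : ℝ) :=
      funext fun x => ((hasDerivAt_id x).const_sub L).deriv
    rw [hd]
    simp
    linarith [h]
  · exact ⟨0, ⟨le_refl _, hL.le⟩, by simpa using hL.ne'⟩

end helpers

lemma wronskian_const (L μ : ℝ) (f v dv : ℝ → ℝ)
    (hf : ContDiff ℝ 2 f)
    (hode : ∀ x ∈ Icc (0:ℝ) L, -(deriv (deriv f) x) = μ * f x)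
    (hv : ∀ x, HasDerivAt v (dv x) x)
    (hdv : ∀ x, HasDerivAt dv (-(μ * v x)) x) :
    ∀ x ∈ Icc (0:ℝ) L, f x * dv x - deriv f x * v x
      = f 0 * dv 0 - deriv f 0 * v 0 := by
  have hdf : ContDiff ℝ 1 (deriv f) := by
    have h2 : ContDiff ℝ (1+1 : ℕ) f := by exact_mod_cast hf
    exact_mod_cast (contDiff_succ_iff_deriv.mp (by exact_mod_cast h2)).2.2
  have hfd : Differentiable ℝ f := hf.differentiable (by norm_num)
  have hdfd : Differentiable ℝ (deriv f) := hdf.differentiable (by norm_num)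
  have hvc : Continuous v := by
    rw [continuous_iff_continuousAt]; exact fun x => (hv x).differentiableAt.continuousAt
  have hdvc : Continuous dv := by
    rw [continuous_iff_continuousAt]; exact fun x => (hdv x).differentiableAt.continuousAt
  have hWd : ∀ x ∈ Icc (0:ℝ) L, HasDerivAt (fun y => f y * dv y - deriv f y * v y) 0 x := by
    intro x hx
    have h1 : HasDerivAt (fun y => f y * dv y) (deriv f x * dv x + f x * (-(μ * v x))) x :=
      (hfd x).hasDerivAt.mul (hdv x)
    have h2 : HasDerivAt (fun y => deriv f y * v y)
        (deriv (deriv f) x * v x + deriv f x * dv x) x :=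
      (hdfd x).hasDerivAt.mul (hv x)
    have h3 := h1.sub h2
    have hx2 : deriv (deriv f) x = -(μ * f x) := by have := hode x hx; linarith
    convert h3 using 1 <;> (try rfl)
    rw [hx2]; ring
  exact constant_of_has_deriv_right_zero
    (((hf.continuous.mul hdvc).sub (hdf.continuous.mul hvc)).continuousOn)
    (fun x hx => ((hWd x (mem_Icc_of_Ico hx)).hasDerivWithinAt))

lemma classify_pos {L α μ : ℝ} (hL : 0 < L) {f : ℝ → ℝ} (hf : IsRobinDirichletEF L α μ f)
    (hμ : 0 < μ) :
    Real.sin (Real.sqrt μ * L) ≠ 0 ∧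
      Real.sqrt μ * Real.cos (Real.sqrt μ * L) + α * Real.sin (Real.sqrt μ * L) = 0 := by
  obtain ⟨hsm, hode, hfL, hrob, x0, hx0, hfx0⟩ := hf
  set s := Real.sqrt μ with hs
  have hs0 : 0 < s := Real.sqrt_pos.mpr hμ
  have hss : s^2 = μ := Real.sq_sqrt hμ.le
  have W1 := wronskian_const L μ f (fun y => Real.sin (s*(L-y)))
      (fun x => -(s * Real.cos (s*(L-x)))) hsm hode (hd_sinA s L) (fun x => by
        have := ((hd_cosA s L x).const_mul s).neg
        convert this using 1 <;> (try rfl)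
        rw [← hss]; ring)
  have W2 := wronskian_const L μ f (fun y => Real.cos (s*(L-y)))
      (fun x => s * Real.sin (s*(L-x))) hsm hode (hd_cosA s L) (fun x => by
        have := (hd_sinA s L x).const_mul s
        convert this using 1 <;> (try rfl)
        rw [← hss]; ring)
  have hLmem : L ∈ Icc (0:ℝ) L := ⟨hL.le, le_refl _⟩
  set D := deriv f L with hD
  have c1 : f 0 * (-(s * Real.cos (s*L))) - deriv f 0 * Real.sin (s*L) = 0 := by
    have := (W1 L hLmem).symm
    simpa [hfL] using this
  have c2 : f 0 * (s * Real.sin (s*L)) - deriv f 0 * Real.cos (s*L) = -D := by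
    have := (W2 L hLmem).symm
    simpa [hfL] using this
  have key : ∀ x ∈ Icc (0:ℝ) L,
      s * f x = -D * Real.sin (s*(L-x)) ∧ deriv f x = D * Real.cos (s*(L-x)) := by
    intro x hx
    have E1 : f x * (-(s * Real.cos (s*(L-x)))) - deriv f x * Real.sin (s*(L-x)) = 0 := by
      have := W1 x hx
      simp only [sub_zero] at this
      rw [this]; linarith [c1]
    have E2 : f x * (s * Real.sin (s*(L-x))) - deriv f x * Real.cos (s*(L-x)) = -D := by
      have := W2 x hx
      simp only [sub_zero] at this
      rw [this]; linarith [c2]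
    have pyth := Real.sin_sq_add_cos_sq (s*(L-x))
    constructor
    · linear_combination (-(Real.cos (s*(L-x)))) * E1 + (Real.sin (s*(L-x))) * E2
        + (-(s * f x)) * pyth
    · linear_combination (-(Real.sin (s*(L-x)))) * E1 + (-(Real.cos (s*(L-x)))) * E2
        + (-(deriv f x)) * pyth
  have h0mem : (0:ℝ) ∈ Icc (0:ℝ) L := ⟨le_refl _, hL.le⟩
  have hD0 : D ≠ 0 := by
    intro h
    have := (key x0 hx0).1
    rw [h] at this
    simp at this
    rcases this with h'|h'
    · exact hs0.ne' h'
    · exact hfx0 h'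
  have hf0 := (key 0 h0mem).1
  have hdf0 := (key 0 h0mem).2
  simp only [sub_zero] at hf0 hdf0
  rw [hdf0] at hrob
  have hsin : Real.sin (s*L) ≠ 0 := by
    intro hzero
    have hcos : Real.cos (s*L)^2 = 1 := by nlinarith [Real.sin_sq_add_cos_sq (s*L)]
    rw [hzero] at hf0
    have hf00 : f 0 = 0 := by
      have h2 : s * f 0 = 0 := by rw [hf0]; ring
      rcases mul_eq_zero.mp h2 with h|h
      · exact absurd h hs0.ne'
      · exact h
    rw [hf00] at hrob
    simp at hrob
    rcases hrob with h|h
    · exact hD0 h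
    · nlinarith
  refine ⟨hsin, ?_⟩
  have h3 : s * (D * Real.cos (s*L)) = α * (s * f 0) := by rw [hrob]; ring
  rw [hf0] at h3
  have h2 : D * (s * Real.cos (s*L) + α * Real.sin (s*L)) = 0 := by linarith [h3]
  rcases mul_eq_zero.mp h2 with h|h
  · exact absurd h hD0
  · exact h
lemma classify_neg {L α μ : ℝ} (hL : 0 < L) {f : ℝ → ℝ} (hf : IsRobinDirichletEF L α μ f)
    (hμ : μ < 0) :
    Real.sqrt (-μ) * Real.cosh (Real.sqrt (-μ) * L)
      + α * Real.sinh (Real.sqrt (-μ) * L) = 0 := by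
  obtain ⟨hsm, hode, hfL, hrob, x0, hx0, hfx0⟩ := hf
  set s := Real.sqrt (-μ) with hs
  have hs0 : 0 < s := Real.sqrt_pos.mpr (by linarith)
  have hss : s^2 = -μ := Real.sq_sqrt (by linarith)
  have W1 := wronskian_const L μ f (fun y => Real.sinh (s*(L-y)))
      (fun x => -(s * Real.cosh (s*(L-x)))) hsm hode (hd_sinhA s L) (fun x => by
        have := ((hd_coshA s L x).const_mul s).neg
        convert this using 1 <;> (try rfl)
        have : μ = -(s^2) := by linarith [hss]
        rw [this]; ring)
  have W2 := wronskian_const L μ f (fun y => Real.cosh (s*(L-y)))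
      (fun x => -(s * Real.sinh (s*(L-x)))) hsm hode (hd_coshA s L) (fun x => by
        have := ((hd_sinhA s L x).const_mul s).neg
        convert this using 1 <;> (try rfl)
        have : μ = -(s^2) := by linarith [hss]
        rw [this]; ring)
  have hLmem : L ∈ Icc (0:ℝ) L := ⟨hL.le, le_refl _⟩
  set D := deriv f L with hD
  have c1 : f 0 * (-(s * Real.cosh (s*L))) - deriv f 0 * Real.sinh (s*L) = 0 := by
    have := (W1 L hLmem).symm
    simpa [hfL] using this
  have c2 : f 0 * (-(s * Real.sinh (s*L))) - deriv f 0 * Real.cosh (s*L) = -D := by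
    have := (W2 L hLmem).symm
    simpa [hfL] using this
  have key : ∀ x ∈ Icc (0:ℝ) L,
      s * f x = -D * Real.sinh (s*(L-x)) ∧ deriv f x = D * Real.cosh (s*(L-x)) := by
    intro x hx
    have E1 : f x * (-(s * Real.cosh (s*(L-x)))) - deriv f x * Real.sinh (s*(L-x)) = 0 := by
      have := W1 x hx
      simp only [sub_zero] at this
      rw [this]; linarith [c1]
    have E2 : f x * (-(s * Real.sinh (s*(L-x)))) - deriv f x * Real.cosh (s*(L-x)) = -D := by
      have := W2 x hx
      simp only [sub_zero] at this
      rw [this]; linarith [c2]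
    have pyth := Real.cosh_sq_sub_sinh_sq (s*(L-x))
    constructor
    · linear_combination (-(Real.cosh (s*(L-x)))) * E1 + (Real.sinh (s*(L-x))) * E2
        + (-(s * f x)) * pyth
    · linear_combination (Real.sinh (s*(L-x))) * E1 + (-(Real.cosh (s*(L-x)))) * E2
        + (-(deriv f x)) * pyth
  have h0mem : (0:ℝ) ∈ Icc (0:ℝ) L := ⟨le_refl _, hL.le⟩
  have hD0 : D ≠ 0 := by
    intro h
    have := (key x0 hx0).1
    rw [h] at this
    simp at this
    rcases this with h'|h'
    · exact hs0.ne' h'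
    · exact hfx0 h'
  have hf0 := (key 0 h0mem).1
  have hdf0 := (key 0 h0mem).2
  simp only [sub_zero] at hf0 hdf0
  rw [hdf0] at hrob
  have h3 : s * (D * Real.cosh (s*L)) = α * (s * f 0) := by rw [hrob]; ring
  rw [hf0] at h3
  have h2 : D * (s * Real.cosh (s*L) + α * Real.sinh (s*L)) = 0 := by linarith [h3]
  rcases mul_eq_zero.mp h2 with h|h
  · exact absurd h hD0
  · exact h

lemma classify_zero {L α : ℝ} (hL : 0 < L) {f : ℝ → ℝ} (hf : IsRobinDirichletEF L α 0 f) :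
    α * L = -1 := by
  obtain ⟨hsm, hode, hfL, hrob, x0, hx0, hfx0⟩ := hf
  have W1 := wronskian_const L 0 f (fun y => L - y) (fun _ => (-1:ℝ)) hsm hode
      (fun x => (hasDerivAt_id x).const_sub L) (fun x => by simpa using hasDerivAt_const x (-1:ℝ))
  have W2 := wronskian_const L 0 f (fun _ => (1:ℝ)) (fun _ => (0:ℝ)) hsm hode
      (fun x => hasDerivAt_const x 1) (fun x => by simpa using hasDerivAt_const x (0:ℝ))
  have hLmem : L ∈ Icc (0:ℝ) L := ⟨hL.le, le_refl _⟩
  set D := deriv f L with hD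
  have c1 : f 0 * (-1) - deriv f 0 * L = 0 := by
    have := (W1 L hLmem).symm
    simpa [hfL] using this
  have c2 : deriv f 0 = D := by
    have := (W2 L hLmem).symm
    simpa [hfL] using this
  have key : ∀ x ∈ Icc (0:ℝ) L, f x = -D * (L - x) ∧ deriv f x = D := by
    intro x hx
    have E1 : f x * (-1) - deriv f x * (L - x) = f 0 * (-1) - deriv f 0 * L := by
      have := W1 x hx
      simpa using this
    have E2 : deriv f x = D := by
      have := W2 x hx
      simp at this
      rw [this, c2]
    rw [c1] at E1
    rw [E2] at E1
    constructor
    · linear_combination (-1) * E1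
    · exact E2
  have h0mem : (0:ℝ) ∈ Icc (0:ℝ) L := ⟨le_refl _, hL.le⟩
  have hD0 : D ≠ 0 := by
    intro h
    have := (key x0 hx0).1
    rw [h] at this
    simp at this
    exact hfx0 this
  have hf0 := (key 0 h0mem).1
  have hdf0 := (key 0 h0mem).2
  simp only [sub_zero] at hf0 hdf0
  rw [hdf0, hf0] at hrob
  have h2 : D * (1 + α * L) = 0 := by linarith [hrob]
  rcases mul_eq_zero.mp h2 with h|h
  · exact absurd h hD0
  · linarith

/-- Full classification of Robin-Dirichlet eigenvalues. -/
lemma classify {L α μ : ℝ} (hL : 0 < L) (hf : ∃ f, IsRobinDirichletEF L α μ f) :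
    (0 < μ ∧ Real.sin (Real.sqrt μ * L) ≠ 0 ∧
      Real.sqrt μ * Real.cos (Real.sqrt μ * L) + α * Real.sin (Real.sqrt μ * L) = 0)
    ∨ (μ = 0 ∧ α * L = -1)
    ∨ (μ < 0 ∧ Real.sqrt (-μ) * Real.cosh (Real.sqrt (-μ) * L)
        + α * Real.sinh (Real.sqrt (-μ) * L) = 0) := by
  obtain ⟨f, hf⟩ := hf
  rcases lt_trichotomy μ 0 with h|h|h
  · exact Or.inr (Or.inr ⟨h, classify_neg hL hf h⟩)
  · exact Or.inr (Or.inl ⟨h, classify_zero hL (h ▸ hf)⟩)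
  · exact Or.inl ⟨h, classify_pos hL hf h⟩
/-! Inequality helpers -/

lemma sinh_lt_mul_cosh {u : ℝ} (hu : 0 < u) : Real.sinh u < u * Real.cosh u := by
  have h : StrictMonoOn (fun u => u * Real.cosh u - Real.sinh u) (Ici 0) := by
    apply strictMonoOn_of_deriv_pos (convex_Ici 0)
    · exact ((continuous_id.mul Real.continuous_cosh).sub Real.continuous_sinh).continuousOn
    · intro x hx
      rw [interior_Ici] at hx
      have hd : HasDerivAt (fun u => u * Real.cosh u - Real.sinh u) (x * Real.sinh x) x := by
        have h1 := ((hasDerivAt_id x).mul (Real.hasDerivAt_cosh x)).sub (Real.hasDerivAt_sinh x)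
        convert h1 using 1 <;> (try rfl)
        simp [id]
      rw [hd.deriv]
      exact mul_pos hx (by rwa [Real.sinh_pos_iff])
  have h2 := h (self_mem_Ici) (mem_Ici.mpr hu.le) hu
  simpa using h2

lemma mul_cos_lt_sin {u : ℝ} (h0 : 0 < u) (hπ : u < π) : u * Real.cos u < Real.sin u := by
  have h : StrictMonoOn (fun u => Real.sin u - u * Real.cos u) (Icc 0 π) := by
    apply strictMonoOn_of_deriv_pos (convex_Icc 0 π)
    · exact (Real.continuous_sin.sub (continuous_id.mul Real.continuous_cos)).continuousOn
    · intro x hx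
      rw [interior_Icc] at hx
      have hd : HasDerivAt (fun u => Real.sin u - u * Real.cos u) (x * Real.sin x) x := by
        have h1 := (Real.hasDerivAt_sin x).sub ((hasDerivAt_id x).mul (Real.hasDerivAt_cos x))
        convert h1 using 1 <;> (try rfl)
        simp [id]
      rw [hd.deriv]
      exact mul_pos hx.1 (Real.sin_pos_of_pos_of_lt_pi hx.1 hx.2)
  have h2 := h (left_mem_Icc.mpr Real.pi_pos.le) (mem_Icc.mpr ⟨h0.le, hπ.le⟩) h0
  simpa using h2

lemma sin_ne_band {L : ℝ} (hL : 0 < L) (k : ℕ) {s : ℝ}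
    (h1 : (k:ℝ)*π/L < s) (h2 : s < ((k:ℝ)+1)*π/L) : Real.sin (s*L) ≠ 0 := by
  intro h
  obtain ⟨m, hm⟩ := Real.sin_eq_zero_iff.mp h
  rw [div_lt_iff₀ hL] at h1
  rw [lt_div_iff₀ hL] at h2
  rw [← hm] at h1 h2
  have h3 : (k:ℝ) < m := (mul_lt_mul_iff_left₀ Real.pi_pos).mp h1
  have h4 : (m:ℝ) < (k:ℝ)+1 := (mul_lt_mul_iff_left₀ Real.pi_pos).mp h2
  have h5 : (k:ℤ) < m := by exact_mod_cast h3
  have h6 : m < (k:ℤ)+1 := by exact_mod_cast h4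
  omega

lemma hasDerivAt_hfun {L : ℝ} (x : ℝ) (hx : Real.sin (x*L) ≠ 0) :
    HasDerivAt (fun s => s * Real.cos (s*L) / Real.sin (s*L))
      ((Real.sin (x*L) * Real.cos (x*L) - x*L) / (Real.sin (x*L))^2) x := by
  have hid : HasDerivAt (fun s : ℝ => s*L) L x := by
    simpa using (hasDerivAt_id x).mul_const L
  have h1 : HasDerivAt (fun s : ℝ => Real.cos (s*L)) (-Real.sin (x*L) * L) x :=
    (Real.hasDerivAt_cos (x*L)).comp (h₂ := Real.cos) x hid
  have hnum : HasDerivAt (fun s : ℝ => s * Real.cos (s*L))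
      (1 * Real.cos (x*L) + x * (-Real.sin (x*L) * L)) x :=
    (hasDerivAt_id x).mul h1
  have hden : HasDerivAt (fun s : ℝ => Real.sin (s*L)) (Real.cos (x*L) * L) x :=
    (Real.hasDerivAt_sin (x*L)).comp (h₂ := Real.sin) x hid
  have h2 := hnum.div hden hx
  convert h2 using 1 <;> (try rfl)
  have pyth := Real.sin_sq_add_cos_sq (x*L)
  rw [div_eq_div_iff (by positivity) (by positivity)]
  linear_combination (x*L*(Real.sin (x*L))^2) * pyth

lemma hband_strictAnti {L : ℝ} (hL : 0 < L) (k : ℕ) :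
    StrictAntiOn (fun s => s * Real.cos (s*L) / Real.sin (s*L))
      (Ioo ((k:ℝ)*π/L) (((k:ℝ)+1)*π/L)) := by
  apply strictAntiOn_of_deriv_neg (convex_Ioo _ _)
  · apply ContinuousOn.div
    · exact (continuous_id.mul (Real.continuous_cos.comp (continuous_mul_right L))).continuousOn
    · exact (Real.continuous_sin.comp (continuous_mul_right L)).continuousOn
    · intro x hx; exact sin_ne_band hL k hx.1 hx.2
  · intro x hx
    rw [interior_Ioo] at hx
    have hs := sin_ne_band hL k hx.1 hx.2
    have hx0 : 0 < x := lt_of_le_of_lt (by positivity : (0:ℝ) ≤ (k:ℝ)*π/L) hx.1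
    rw [(hasDerivAt_hfun x hs).deriv]
    apply div_neg_of_neg_of_pos
    · have h2 : Real.sin (2*(x*L)) < 2*(x*L) := Real.sin_lt (by positivity)
      rw [Real.sin_two_mul] at h2
      nlinarith
    · exact lt_of_le_of_ne (sq_nonneg _) (Ne.symm (pow_ne_zero 2 hs))

lemma psifun_strictMono {L : ℝ} (hL : 0 < L) :
    StrictMonoOn (fun t => t * Real.cosh (t*L) / Real.sinh (t*L)) (Ioi 0) := by
  apply strictMonoOn_of_deriv_pos (convex_Ioi 0)
  · apply ContinuousOn.div
    · exact (continuous_id.mul (Real.continuous_cosh.comp (continuous_mul_right L))).continuousOn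
    · exact (Real.continuous_sinh.comp (continuous_mul_right L)).continuousOn
    · intro x hx
      exact ne_of_gt (Real.sinh_pos_iff.mpr (by
        have : (0:ℝ) < x := hx
        positivity))
  · intro x hx
    rw [interior_Ioi] at hx
    have hx0 : (0:ℝ) < x := hx
    have hsp : 0 < Real.sinh (x*L) := Real.sinh_pos_iff.mpr (by positivity)
    have hid : HasDerivAt (fun s : ℝ => s*L) L x := by
      simpa using (hasDerivAt_id x).mul_const L
    have h1 : HasDerivAt (fun s : ℝ => Real.cosh (s*L)) (Real.sinh (x*L) * L) x :=
      (Real.hasDerivAt_cosh (x*L)).comp (h₂ := Real.cosh) x hid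
    have hnum : HasDerivAt (fun s : ℝ => s * Real.cosh (s*L))
        (1 * Real.cosh (x*L) + x * (Real.sinh (x*L) * L)) x :=
      (hasDerivAt_id x).mul h1
    have hden : HasDerivAt (fun s : ℝ => Real.sinh (s*L)) (Real.cosh (x*L) * L) x :=
      (Real.hasDerivAt_sinh (x*L)).comp (h₂ := Real.sinh) x hid
    have h2 := hnum.div hden hsp.ne'
    erw [h2.deriv]
    apply div_pos
    · have h3 : Real.sinh (2*(x*L)) > 2*(x*L) := by
        have := Real.self_lt_sinh_iff.mpr (show (0:ℝ) < 2*(x*L) by positivity)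
        linarith
      rw [Real.sinh_two_mul] at h3
      have pyth := Real.cosh_sq_sub_sinh_sq (x*L)
      have h4 : x*L*(Real.cosh (x*L)^2 - Real.sinh (x*L)^2) = x*L*1 := by rw [pyth]
      nlinarith [h3, h4]
    · positivity
/-! Existence of eigenvalues in each band -/

lemma cos_nat_pi (k : ℕ) : Real.cos ((k:ℝ)*π) = (-1)^k := by
  have := Real.cos_nat_mul_pi_sub 0 k
  simpa using this

lemma g_cont (L α : ℝ) : Continuous (fun s => s * Real.cos (s*L) + α * Real.sin (s*L)) :=
  (continuous_id.mul (Real.continuous_cos.comp (continuous_mul_right L))).add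
    (continuous_const.mul (Real.continuous_sin.comp (continuous_mul_right L)))

lemma g_at_nat {L : ℝ} (α : ℝ) (hL : 0 < L) (k : ℕ) :
    ((k:ℝ)*π/L) * Real.cos (((k:ℝ)*π/L)*L) + α * Real.sin (((k:ℝ)*π/L)*L)
      = ((k:ℝ)*π/L) * (-1)^k := by
  have hLL : ((k:ℝ)*π/L)*L = (k:ℝ)*π := by field_simp
  rw [hLL, cos_nat_pi, Real.sin_nat_mul_pi]
  ring

lemma root_band {L α : ℝ} (hL : 0 < L) (k : ℕ) (hk : 1 ≤ k) :
    ∃ s : ℝ, s ∈ Ioo ((k:ℝ)*π/L) (((k:ℝ)+1)*π/L) ∧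
      s * Real.cos (s*L) + α * Real.sin (s*L) = 0 := by
  have hπ := Real.pi_pos
  set g : ℝ → ℝ := fun s => s * Real.cos (s*L) + α * Real.sin (s*L) with hgdef
  set a : ℝ := (k:ℝ)*π/L with ha
  set b : ℝ := ((k:ℝ)+1)*π/L with hb
  have hk' : (1:ℝ) ≤ (k:ℝ) := by exact_mod_cast hk
  have ha0 : 0 < a := by rw [ha]; positivity -- may fail for k; fix below
  have hab : a < b := by
    rw [ha, hb, div_lt_div_iff₀ hL hL]
    nlinarith
  have hga : g a = a * (-1)^k := g_at_nat α hL k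
  have hgb : g b = b * (-1)^(k+1) := by
    have h2 := g_at_nat α hL (k+1)
    have h3 : (((k+1:ℕ)):ℝ) = (k:ℝ)+1 := by push_cast; ring
    rw [h3] at h2
    exact h2
  have hcont : ContinuousOn g (Icc a b) := (g_cont L α).continuousOn
  rcases Nat.even_or_odd k with hpar|hpar
  · have h1 : ((-1:ℝ))^k = 1 := hpar.neg_one_pow
    have h2 : ((-1:ℝ))^(k+1) = -1 := (hpar.add_one).neg_one_pow
    rw [h1, mul_one] at hga
    rw [h2] at hgb
    have h0 : (0:ℝ) ∈ Ioo (g b) (g a) := by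
      rw [hga, hgb]; constructor <;> nlinarith
    obtain ⟨s, hs, hgs⟩ := intermediate_value_Ioo' hab.le hcont h0
    exact ⟨s, hs, hgs⟩
  · have h1 : ((-1:ℝ))^k = -1 := hpar.neg_one_pow
    have h2 : ((-1:ℝ))^(k+1) = 1 := (hpar.add_one).neg_one_pow
    rw [h1] at hga
    rw [h2, mul_one] at hgb
    have h0 : (0:ℝ) ∈ Ioo (g a) (g b) := by
      rw [hga, hgb]; constructor <;> nlinarith
    obtain ⟨s, hs, hgs⟩ := intermediate_value_Ioo hab.le hcont h0
    exact ⟨s, hs, hgs⟩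

lemma root_low {L α : ℝ} (hL : 0 < L) :
    ∃ μ : ℝ, μ < (π/L)^2 ∧ ∃ f, IsRobinDirichletEF L α μ f := by
  have hπ := Real.pi_pos
  rcases lt_trichotomy (α*L) (-1) with hcase|hcase|hcase
  · -- α L < -1 : negative eigenvalue
    set G : ℝ → ℝ := fun t => t * Real.cosh (t*L) + α * Real.sinh (t*L) with hGdef
    have hGcont : Continuous G :=
      (continuous_id.mul (Real.continuous_cosh.comp (continuous_mul_right L))).add
        (continuous_const.mul (Real.continuous_sinh.comp (continuous_mul_right L)))
    have hG0 : G 0 = 0 := by simp [hGdef]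
    have hid : HasDerivAt (fun s : ℝ => s*L) L 0 := by
      simpa using (hasDerivAt_id (0:ℝ)).mul_const L
    have hder : HasDerivAt G (1 + α*L) 0 := by
      have h1 : HasDerivAt (fun t : ℝ => t * Real.cosh (t*L))
          (1 * Real.cosh ((0:ℝ)*L) + 0 * (Real.sinh ((0:ℝ)*L) * L)) 0 :=
        (hasDerivAt_id 0).mul ((Real.hasDerivAt_cosh ((0:ℝ)*L)).comp (h₂ := Real.cosh) 0 hid)
      have h2 : HasDerivAt (fun t : ℝ => α * Real.sinh (t*L))
          (α * (Real.cosh ((0:ℝ)*L) * L)) 0 :=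
        ((Real.hasDerivAt_sinh ((0:ℝ)*L)).comp (h₂ := Real.sinh) 0 hid).const_mul α
      have h3 := h1.add h2
      convert h3 using 1 <;> (try rfl)
      simp
    have htend := (hasDerivAt_iff_tendsto_slope.mp hder).mono_left
      (nhdsWithin_mono 0 (fun x (hx : x ∈ Ioi (0:ℝ)) =>
        mem_compl_singleton_iff.mpr (ne_of_gt hx)))
    have hev : ∀ᶠ x in 𝓝[>] (0:ℝ), slope G 0 x < 0 :=
      htend.eventually (eventually_lt_nhds (by linarith))
    obtain ⟨t1, hslope, ht1⟩ := (hev.and self_mem_nhdsWithin).exists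
    have ht1' : (0:ℝ) < t1 := ht1
    have hGt1 : G t1 < 0 := by
      rw [slope_def_field, hG0, sub_zero, sub_zero] at hslope
      rcases div_neg_iff.mp hslope with ⟨h1, h2⟩|⟨h1, h2⟩
      · linarith
      · exact h1
    set T : ℝ := max (t1+1) (|α|+1) with hT
    have hTt1 : t1 < T := lt_of_lt_of_le (by linarith) (le_max_left _ _)
    have hTα : |α| < T := lt_of_lt_of_le (by linarith) (le_max_right _ _)
    have hT0 : 0 < T := lt_trans ht1' hTt1
    have hc : 0 < Real.cosh (T*L) := Real.cosh_pos _
    have hs0 : 0 < Real.sinh (T*L) := Real.sinh_pos_iff.mpr (by positivity)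
    have hsc : Real.sinh (T*L) < Real.cosh (T*L) := by
      have := Real.cosh_sub_sinh (T*L)
      nlinarith [Real.exp_pos (-(T*L))]
    have hGT : 0 < G T := by
      rw [hGdef]
      simp only []
      have e1 : (0:ℝ) ≤ α + |α| := by linarith [neg_abs_le α]
      have e2 : (0:ℝ) ≤ |α| := abs_nonneg α
      nlinarith [mul_nonneg e1 hs0.le, mul_nonneg e2 (by linarith : (0:ℝ) ≤ Real.cosh (T*L) - Real.sinh (T*L)), mul_pos (by linarith : (0:ℝ) < T - |α|) hc]
    have h0 : (0:ℝ) ∈ Ioo (G t1) (G T) := ⟨hGt1, hGT⟩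
    obtain ⟨t, ht, hGt⟩ := intermediate_value_Ioo hTt1.le hGcont.continuousOn h0
    have ht0 : 0 < t := lt_trans ht1' ht.1
    refine ⟨-(t^2), ?_, ef_sinh hL ht0 hGt⟩
    · have h1 : (0:ℝ) < (π/L)^2 := by positivity
      nlinarith [sq_nonneg t]
  · exact ⟨0, by positivity, ef_lin hL hcase⟩
  · -- α L > -1 : small positive eigenvalue
    set g : ℝ → ℝ := fun s => s * Real.cos (s*L) + α * Real.sin (s*L) with hgdef
    have hg0 : g 0 = 0 := by simp [hgdef]
    have hid : HasDerivAt (fun s : ℝ => s*L) L 0 := by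
      simpa using (hasDerivAt_id (0:ℝ)).mul_const L
    have hder : HasDerivAt g (1 + α*L) 0 := by
      have h1 : HasDerivAt (fun t : ℝ => t * Real.cos (t*L))
          (1 * Real.cos ((0:ℝ)*L) + 0 * (-Real.sin ((0:ℝ)*L) * L)) 0 :=
        (hasDerivAt_id 0).mul ((Real.hasDerivAt_cos ((0:ℝ)*L)).comp (h₂ := Real.cos) 0 hid)
      have h2 : HasDerivAt (fun t : ℝ => α * Real.sin (t*L))
          (α * (Real.cos ((0:ℝ)*L) * L)) 0 :=
        ((Real.hasDerivAt_sin ((0:ℝ)*L)).comp (h₂ := Real.sin) 0 hid).const_mul α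
      have h3 := h1.add h2
      convert h3 using 1 <;> (try rfl)
      simp
    have htend := (hasDerivAt_iff_tendsto_slope.mp hder).mono_left
      (nhdsWithin_mono 0 (fun x (hx : x ∈ Ioi (0:ℝ)) =>
        mem_compl_singleton_iff.mpr (ne_of_gt hx)))
    have hev : ∀ᶠ x in 𝓝[>] (0:ℝ), 0 < slope g 0 x :=
      htend.eventually (eventually_gt_nhds (by linarith))
    have hmem : Ioo (0:ℝ) (π/L) ∈ 𝓝[>] (0:ℝ) :=
      Ioo_mem_nhdsGT_of_mem ⟨le_refl _, by positivity⟩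
    obtain ⟨s1, hslope, hs1⟩ := (hev.and (eventually_of_mem hmem (fun x hx => hx))).exists
    have hs1' : (0:ℝ) < s1 := hs1.1
    have hgs1 : 0 < g s1 := by
      rw [slope_def_field, hg0, sub_zero, sub_zero] at hslope
      rcases div_pos_iff.mp hslope with ⟨h1, h2⟩|⟨h1, h2⟩
      · exact h1
      · linarith
    have hgb : g (π/L) = -(π/L) := by
      have hLL : (π/L)*L = π := by field_simp
      simp [hgdef, hLL]
    have h0 : (0:ℝ) ∈ Ioo (g (π/L)) (g s1) := ⟨by rw [hgb]; exact neg_lt_zero.mpr (by positivity), hgs1⟩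
    obtain ⟨s, hs, hgs⟩ := intermediate_value_Ioo' hs1.2.le (g_cont L α).continuousOn h0
    have hs0 : 0 < s := lt_trans hs1' hs.1
    refine ⟨s^2, ?_, ef_sin hL hs0 hgs⟩
    exact pow_lt_pow_left₀ hs.2 hs0.le (by norm_num)
/-! At most one eigenvalue per band -/

lemma band_bounds {L μ : ℝ} (hL : 0 < L) (hμ : 0 < μ)
    (hsin : Real.sin (Real.sqrt μ * L) ≠ 0) :
    Real.sqrt μ ∈ Ioo ((⌊Real.sqrt μ * L / π⌋₊ : ℝ)*π/L)
      ((⌊Real.sqrt μ * L / π⌋₊ : ℝ)*π/L + π/L) := by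
  have hπ := Real.pi_pos
  set s := Real.sqrt μ with hs
  have hs0 : 0 < s := Real.sqrt_pos.mpr hμ
  set k := ⌊s*L/π⌋₊ with hk
  have hnn : 0 ≤ s*L/π := by positivity
  have h1 : (k:ℝ) ≤ s*L/π := Nat.floor_le hnn
  have h2 : s*L/π < (k:ℝ)+1 := Nat.lt_floor_add_one _
  constructor
  · rw [div_lt_iff₀ hL]
    rw [le_div_iff₀ hπ] at h1
    rcases lt_or_eq_of_le h1 with h|h
    · linarith
    · exfalso; apply hsin; rw [← h]; exact Real.sin_nat_mul_pi k
  · rw [div_lt_iff₀ hπ] at h2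
    have : s*L < ((k:ℝ)+1)*π := by linarith
    rw [show (k:ℝ)*π/L + π/L = ((k:ℝ)+1)*π/L by ring, lt_div_iff₀ hL]
    linarith

lemma eigen_unique {L α : ℝ} (hL : 0 < L) {μ ν : ℝ}
    (hμ : ∃ f, IsRobinDirichletEF L α μ f) (hν : ∃ f, IsRobinDirichletEF L α ν f)
    (hlt : μ < ν)
    (hband : ⌊Real.sqrt μ * L / π⌋₊ = ⌊Real.sqrt ν * L / π⌋₊) : False := by
  have hπ := Real.pi_pos
  rcases classify hL hμ with ⟨hμ0, hsinμ, heqμ⟩|⟨hμ0, hαμ⟩|⟨hμ0, heqμ⟩ <;>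
    rcases classify hL hν with ⟨hν0, hsinν, heqν⟩|⟨hν0, hαν⟩|⟨hν0, heqν⟩
  -- (pos,pos)
  · set s := Real.sqrt μ with hsdef
    set s' := Real.sqrt ν with hs'def
    have hss' : s < s' := Real.sqrt_lt_sqrt hμ0.le hlt
    have hmemμ := band_bounds hL hμ0 hsinμ
    have hmemν := band_bounds hL hν0 hsinν
    rw [← hband] at hmemν
    set k := ⌊s*L/π⌋₊ with hk
    have hIoo : ∀ x : ℝ, x ∈ Ioo ((k:ℝ)*π/L) ((k:ℝ)*π/L + π/L) →
        x ∈ Ioo ((k:ℝ)*π/L) (((k:ℝ)+1)*π/L) := by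
      intro x hx
      exact ⟨hx.1, by rw [show ((k:ℝ)+1)*π/L = (k:ℝ)*π/L + π/L by ring]; exact hx.2⟩
    have hmν : s' ∈ Ioo ((k:ℝ)*π/L) (((k:ℝ)+1)*π/L) := hIoo _ hmemν
    have hmμ : s ∈ Ioo ((k:ℝ)*π/L) (((k:ℝ)+1)*π/L) := hIoo _ hmemμ
    have hvμ : s * Real.cos (s*L) / Real.sin (s*L) = -α := by
      rw [div_eq_iff hsinμ]; linarith [heqμ]
    have hvν : s' * Real.cos (s'*L) / Real.sin (s'*L) = -α := by
      rw [div_eq_iff hsinν]; linarith [heqν]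
    have h5 := hband_strictAnti hL k hmμ hmν hss'
    simp only [] at h5
    rw [hvμ, hvν] at h5
    exact lt_irrefl _ h5
  -- (pos,zero)
  · linarith
  -- (pos,neg)
  · linarith
  -- (zero,pos)
  · have hb0 : ⌊Real.sqrt ν * L / π⌋₊ = 0 := by
      rw [← hband, hμ0]; simp
    set s' := Real.sqrt ν with hs'def
    have hs'0 : 0 < s' := Real.sqrt_pos.mpr hν0
    have hmem := band_bounds hL hν0 hsinν
    rw [hb0] at hmem
    simp only [Nat.cast_zero, zero_mul, zero_div, zero_add] at hmem
    have hu1 : 0 < s'*L := by positivity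
    have hu2 : s'*L < π := (lt_div_iff₀ hL).mp hmem.2
    have hr := mul_cos_lt_sin hu1 hu2
    have he : (s'*L) * Real.cos (s'*L) = Real.sin (s'*L) := by
      linear_combination L*heqν - Real.sin (s'*L)*hαμ
    linarith
  -- (zero,zero)
  · linarith
  -- (zero,neg)
  · linarith
  -- (neg,pos)
  · set t := Real.sqrt (-μ) with htdef
    set s' := Real.sqrt ν with hs'def
    have ht0 : 0 < t := Real.sqrt_pos.mpr (by linarith)
    have hs'0 : 0 < s' := Real.sqrt_pos.mpr hν0
    have hb0 : ⌊Real.sqrt ν * L / π⌋₊ = 0 := by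
      have hz : Real.sqrt μ = 0 := Real.sqrt_eq_zero'.mpr hμ0.le
      rw [← hband, hz]; simp
    have hmem := band_bounds hL hν0 hsinν
    rw [hb0] at hmem
    simp only [Nat.cast_zero, zero_mul, zero_div, zero_add] at hmem
    have hu1 : 0 < s'*L := by positivity
    have hu2 : s'*L < π := (lt_div_iff₀ hL).mp hmem.2
    have hsin' : 0 < Real.sin (s'*L) := Real.sin_pos_of_pos_of_lt_pi hu1 hu2
    have hsinh : 0 < Real.sinh (t*L) := Real.sinh_pos_iff.mpr (by positivity)
    have q1 := sinh_lt_mul_cosh (show (0:ℝ) < t*L by positivity)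
    have r1 := mul_cos_lt_sin hu1 hu2
    have eμ : t*L*Real.cosh (t*L) + α*L*Real.sinh (t*L) = 0 := by
      linear_combination L*heqμ
    have eν : s'*L*Real.cos (s'*L) + α*L*Real.sin (s'*L) = 0 := by
      linear_combination L*heqν
    have hA : (1 + α*L) * Real.sinh (t*L) < 0 := by nlinarith [q1, eμ]
    have hB : 0 < (1 + α*L) * Real.sin (s'*L) := by nlinarith [r1, eν]
    nlinarith [hA, hB, hsinh, hsin']
  -- (neg,zero)
  · set t := Real.sqrt (-μ) with htdef
    have ht0 : 0 < t := Real.sqrt_pos.mpr (by linarith)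
    have q1 := sinh_lt_mul_cosh (show (0:ℝ) < t*L by positivity)
    have he : (t*L) * Real.cosh (t*L) = Real.sinh (t*L) := by
      linear_combination L*heqμ - Real.sinh (t*L)*hαν
    linarith
  -- (neg,neg)
  · set t := Real.sqrt (-μ) with htdef
    set t' := Real.sqrt (-ν) with ht'def
    have ht0 : 0 < t := Real.sqrt_pos.mpr (by linarith)
    have ht'0 : 0 < t' := Real.sqrt_pos.mpr (by linarith)
    have htt' : t' < t := Real.sqrt_lt_sqrt (by linarith) (by linarith)
    have hsinh : 0 < Real.sinh (t*L) := Real.sinh_pos_iff.mpr (by positivity)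
    have hsinh' : 0 < Real.sinh (t'*L) := Real.sinh_pos_iff.mpr (by positivity)
    have hvμ : t * Real.cosh (t*L) / Real.sinh (t*L) = -α := by
      rw [div_eq_iff hsinh.ne']; linarith [heqμ]
    have hvν : t' * Real.cosh (t'*L) / Real.sinh (t'*L) = -α := by
      rw [div_eq_iff hsinh'.ne']; linarith [heqν]
    have h5 := psifun_strictMono hL (mem_Ioi.mpr ht'0) (mem_Ioi.mpr ht0) htt'
    simp only [] at h5
    rw [hvμ, hvν] at h5
    exact lt_irrefl _ h5

/-- Dirichlet–Robin interlacing on an interval: if `lam n` (for `n ≥ 1`) enumerates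
the eigenvalues of `-f'' = λ f` on `[0, L]` with `f(L) = 0`, `f'(0) = α f(0)` in
increasing order, then `lam n ≤ (nπ/L)² ≤ lam (n+1)` for all `n ≥ 1`, where
`(nπ/L)²` is the `n`-th Dirichlet eigenvalue. -/
theorem stmt_12 (L α : ℝ) (hL : 0 < L)
    (lam : ℕ → ℝ)
    (hmono : ∀ m n : ℕ, 1 ≤ m → m < n → lam m < lam n)
    (hev : ∀ n : ℕ, 1 ≤ n → ∃ f, IsRobinDirichletEF L α (lam n) f)
    (hall : ∀ μ : ℝ, (∃ f, IsRobinDirichletEF L α μ f) → ∃ n : ℕ, 1 ≤ n ∧ lam n = μ) :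
    ∀ n : ℕ, 1 ≤ n →
      lam n ≤ ((n : ℝ) * π / L) ^ 2 ∧ ((n : ℝ) * π / L) ^ 2 ≤ lam (n + 1) := by
  have hπ := Real.pi_pos
  intro n hn
  constructor
  · -- lam n ≤ (nπ/L)²
    by_contra hgt
    push_neg at hgt
    have key : ∀ j : ℕ, ∃ μ : ℝ, j < n →
        (∃ f, IsRobinDirichletEF L α μ f) ∧ μ < (((j:ℝ)+1)*π/L)^2 ∧
        (1 ≤ j → ((j:ℝ)*π/L)^2 < μ) := by
      intro j
      by_cases hj : j < n
      · rcases Nat.eq_zero_or_pos j with h0|h1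
        · subst h0
          obtain ⟨μ, hμlt, hf⟩ := root_low (α := α) hL
          exact ⟨μ, fun _ => ⟨hf, by simpa using hμlt, by omega⟩⟩
        · obtain ⟨sj, hsj, hroot⟩ := root_band (α := α) hL j h1
          have hsj0 : 0 < sj := lt_of_le_of_lt (by positivity) hsj.1
          refine ⟨sj^2, fun _ => ⟨ef_sin hL hsj0 hroot, ?_, fun _ => ?_⟩⟩
          · exact pow_lt_pow_left₀ hsj.2 hsj0.le (by norm_num)
          · exact pow_lt_pow_left₀ hsj.1 (by positivity) (by norm_num)
      · exact ⟨0, fun h => absurd h hj⟩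
    choose E hE using key
    have horder : ∀ j j' : ℕ, j < j' → j' < n → E j < E j' := by
      intro j j' hjj' hj'
      have hj : j < n := lt_trans hjj' hj'
      have h1 := (hE j hj).2.1
      have h2 := (hE j' hj').2.2 (by omega)
      have h3 : (((j:ℝ)+1)*π/L)^2 ≤ ((j':ℝ)*π/L)^2 := by
        have hc : ((j:ℝ)+1) ≤ (j':ℝ) := by exact_mod_cast hjj'
        have h4 : ((j:ℝ)+1)*π/L ≤ (j':ℝ)*π/L := by gcongr
        exact pow_le_pow_left₀ (by positivity) h4 2
      linarith
    have hmap : ∀ j : ℕ, ∃ m : ℕ, j < n → (1 ≤ m ∧ m < n ∧ lam m = E j) := by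
      intro j
      by_cases hj : j < n
      · obtain ⟨hf, hub, _⟩ := hE j hj
        obtain ⟨m, hm1, hmE⟩ := hall (E j) hf
        refine ⟨m, fun _ => ⟨hm1, ?_, hmE⟩⟩
        by_contra hge
        push_neg at hge
        have h1 : lam n ≤ lam m := by
          rcases lt_or_eq_of_le hge with h|h
          · exact (hmono n m hn h).le
          · rw [h]
        have h2 : E j < ((n:ℝ)*π/L)^2 := by
          have h3 : (((j:ℝ)+1)*π/L)^2 ≤ ((n:ℝ)*π/L)^2 := by
            have hc : ((j:ℝ)+1) ≤ (n:ℝ) := by exact_mod_cast hj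
            have h4 : ((j:ℝ)+1)*π/L ≤ (n:ℝ)*π/L := by gcongr
            exact pow_le_pow_left₀ (by positivity) h4 2
          linarith
        rw [hmE] at h1
        linarith
      · exact ⟨1, fun h => absurd h hj⟩
    choose m hm using hmap
    have hcard : (Finset.Ico 1 n).card < (Finset.range n).card := by
      rw [Nat.card_Ico, Finset.card_range]; omega
    obtain ⟨j, hj, j', hj', hne, heq⟩ := Finset.exists_ne_map_eq_of_card_lt_of_maps_to hcard
      (fun j hj => by
        have h5 := hm j (Finset.mem_range.mp hj)
        exact Finset.mem_Ico.mpr ⟨h5.1, h5.2.1⟩)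
    rw [Finset.mem_range] at hj hj'
    have hEj : E j = E j' := by
      have h1 := (hm j hj).2.2
      have h2 := (hm j' hj').2.2
      rw [← h1, ← h2, heq]
    rcases hne.lt_or_gt with h|h
    · exact absurd hEj (ne_of_lt (horder j j' h hj'))
    · exact absurd hEj.symm (ne_of_lt (horder j' j h hj))
  · -- (nπ/L)² ≤ lam (n+1)
    by_contra hgt
    push_neg at hgt
    have hlt : ∀ i : ℕ, 1 ≤ i → i ≤ n+1 → lam i < ((n:ℝ)*π/L)^2 := by
      intro i h1 h2
      rcases lt_or_eq_of_le h2 with h|h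
      · exact lt_trans (hmono i (n+1) h1 h) hgt
      · rw [h]; exact hgt
    have hbandlt : ∀ i ∈ Finset.Icc 1 (n+1),
        ⌊Real.sqrt (lam i) * L / π⌋₊ ∈ Finset.range n := by
      intro i hi
      rw [Finset.mem_Icc] at hi
      rw [Finset.mem_range]
      rcases le_or_gt (lam i) 0 with h|h
      · rw [Real.sqrt_eq_zero'.mpr h]
        simpa using (show 0 < n by omega)
      · have hs : Real.sqrt (lam i) < (n:ℝ)*π/L := by
          rw [show ((n:ℝ)*π/L)^2 = ((n:ℝ)*π/L)^2 from rfl] at hgt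
          have h2 := hlt i hi.1 hi.2
          have h3 : (0:ℝ) < (n:ℝ)*π/L := by
            have : (1:ℝ) ≤ (n:ℝ) := by exact_mod_cast hn
            positivity
          nlinarith [Real.sq_sqrt h.le, Real.sqrt_nonneg (lam i)]
        rw [Nat.floor_lt (by positivity)]
        rw [div_lt_iff₀ hπ]
        have := (lt_div_iff₀ hL).mp hs
        linarith
    have hcard : (Finset.range n).card < (Finset.Icc 1 (n+1)).card := by
      rw [Nat.card_Icc, Finset.card_range]; omega
    obtain ⟨i, hi, i', hi', hne, heq⟩ :=
      Finset.exists_ne_map_eq_of_card_lt_of_maps_to hcard hbandlt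
    rw [Finset.mem_Icc] at hi hi'
    rcases hne.lt_or_gt with h|h
    · exact eigen_unique hL (hev i hi.1) (hev i' hi'.1) (hmono i i' hi.1 h) heq
    · exact eigen_unique hL (hev i' hi'.1) (hev i hi.1) (hmono i' i hi'.1 h) heq.symm
end
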